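/- Let $g^{ij}$ be a symmetric positive definite $3\times 3$ matrix and $\lambda \ge 0$, $\mu > 0$. Define the isotropic elasticity tensor $A^{ijkl} = \lambda g^{ij}g^{kl} + \mu(g^{ik}g^{jl} + g^{il}g^{jk})$. Then there exists a constant $C > 0$ such that for every symmetric $3\times 3$ matrix $(M_{ij})$, $A^{ijkl} M_{kl} M_{ij} \ge C \sum_{i,j=1}^3 (M_{ij})^2$. -/

import Mathlib

open Finset Matrix
open scoped MatrixOrder

private lemma frob_sq_nonneg (A : Matrix (Fin 3) (Fin 3) ℝ) :
    0 ≤ ∑ i, ∑ j, (A i j) ^ 2 :=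
  Finset.sum_nonneg fun _ _ => Finset.sum_nonneg fun _ _ => sq_nonneg _

/-- Frobenius norm (squared) is submultiplicative. -/
private lemma frob_mul_le (A B : Matrix (Fin 3) (Fin 3) ℝ) :
    ∑ i, ∑ j, ((A * B) i j) ^ 2 ≤
      (∑ i, ∑ j, (A i j) ^ 2) * (∑ i, ∑ j, (B i j) ^ 2) := by
  have h : ∀ i j : Fin 3, ((A * B) i j) ^ 2 ≤ (∑ k, (A i k) ^ 2) * (∑ k, (B k j) ^ 2) := by
    intro i j
    rw [Matrix.mul_apply]
    exact Finset.sum_mul_sq_le_sq_mul_sq _ _ _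
  calc ∑ i, ∑ j, ((A * B) i j) ^ 2
      ≤ ∑ i, ∑ j, (∑ k, (A i k) ^ 2) * (∑ k, (B k j) ^ 2) :=
        Finset.sum_le_sum fun i _ => Finset.sum_le_sum fun j _ => h i j
    _ = (∑ i, ∑ k, (A i k) ^ 2) * (∑ j, ∑ k, (B k j) ^ 2) := by
        rw [Finset.sum_mul]
        refine Finset.sum_congr rfl fun i _ => ?_
        exact (Finset.mul_sum _ _ _).symm
    _ = (∑ i, ∑ j, (A i j) ^ 2) * (∑ i, ∑ j, (B i j) ^ 2) := by
        rw [Finset.sum_comm (f := fun j k => (B k j) ^ 2)]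

/-- Coercivity of the isotropic elasticity tensor built from a symmetric
positive definite metric tensor `g`. -/
theorem elasticity_tensor_coercive
    (g : Matrix (Fin 3) (Fin 3) ℝ) (hgpos : g.PosDef) (hgsym : g.IsSymm)
    (lam mu : ℝ) (hlam : 0 ≤ lam) (hmu : 0 < mu)
    (A : Fin 3 → Fin 3 → Fin 3 → Fin 3 → ℝ)
    (hA : ∀ i j k l, A i j k l =
      lam * g i j * g k l + mu * (g i k * g j l + g i l * g j k)) :
    ∃ C > 0, ∀ M : Matrix (Fin 3) (Fin 3) ℝ, M.IsSymm →
      ∑ i, ∑ j, ∑ k, ∑ l, A i j k l * M k l * M i j ≥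
        C * ∑ i, ∑ j, (M i j) ^ 2 := by
  classical
  set S := CFC.sqrt g with hSdef
  have hg : g = S * S := (CFC.sqrt_mul_sqrt_self g hgpos.posSemidef.nonneg).symm
  have hSsym : Sᵀ = S := by
    have h := (CFC.sqrt_nonneg g).posSemidef.1
    rwa [Matrix.IsHermitian, Matrix.conjTranspose_eq_transpose_of_trivial] at h
  have hgs : ∀ i j, g i j = g j i := fun i j => congrFun (congrFun hgsym j) i
  have hdet : IsUnit S.det := by
    have hd : S.det * S.det = g.det := by rw [← Matrix.det_mul, ← hg]
    refine isUnit_iff_ne_zero.mpr fun h0 => ?_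
    rw [h0, zero_mul] at hd
    exact hgpos.det_pos.ne' hd.symm
  have hSiS : S⁻¹ * S = 1 := Matrix.nonsing_inv_mul S hdet
  have hSSi : S * S⁻¹ = 1 := Matrix.mul_nonsing_inv S hdet
  set c : ℝ := ∑ i, ∑ j, (S⁻¹ i j) ^ 2 with hc
  have hcpos : 0 < c := by
    rcases (frob_sq_nonneg S⁻¹).lt_or_eq with h | h
    · exact h
    · exfalso
      have hSi : S⁻¹ = 0 := by
        ext i j
        have h2 := (Finset.sum_eq_zero_iff_of_nonneg
          (fun i _ => Finset.sum_nonneg fun j _ => sq_nonneg (S⁻¹ i j))).mp h.symm i (mem_univ i)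
        have h3 := (Finset.sum_eq_zero_iff_of_nonneg
          (fun j _ => sq_nonneg (S⁻¹ i j))).mp h2 j (mem_univ j)
        simpa using pow_eq_zero_iff two_ne_zero |>.mp h3
      rw [hSi, Matrix.zero_mul] at hSiS
      exact zero_ne_one hSiS
  refine ⟨mu / c ^ 2, by positivity, ?_⟩
  intro M hM
  have hMs : ∀ i j, M i j = M j i := fun i j => congrFun (congrFun hM j) i
  set N : Matrix (Fin 3) (Fin 3) ℝ := S * M * S with hN
  set T : ℝ := ∑ i, ∑ j, g i j * M i j with hT
  set F : ℝ := ∑ i, ∑ j, (N i j) ^ 2 with hF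
  set P : ℝ := ∑ i, ∑ j, (M i j) ^ 2 with hP
  -- split the quadruple sum into three pieces
  have split : ∑ i, ∑ j, ∑ k, ∑ l, A i j k l * M k l * M i j
      = (∑ i, ∑ j, ∑ k, ∑ l, lam * ((g i j * M i j) * (g k l * M k l)))
      + (∑ i, ∑ j, ∑ k, ∑ l, mu * (g i k * g j l * M k l * M i j))
      + (∑ i, ∑ j, ∑ k, ∑ l, mu * (g i l * g j k * M k l * M i j)) := by
    simp only [hA, ← Finset.sum_add_distrib]
    exact Finset.sum_congr rfl fun i _ => Finset.sum_congr rfl fun j _ =>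
      Finset.sum_congr rfl fun k _ => Finset.sum_congr rfl fun l _ => by ring
  have t1 : (∑ i, ∑ j, ∑ k, ∑ l, lam * ((g i j * M i j) * (g k l * M k l)))
      = lam * T ^ 2 := by
    simp only [← Finset.mul_sum, ← Finset.sum_mul, hT]
    ring
  have t3 : (∑ i, ∑ j, ∑ k, ∑ l, mu * (g i l * g j k * M k l * M i j))
      = (∑ i, ∑ j, ∑ k, ∑ l, mu * (g i k * g j l * M k l * M i j)) := by
    refine Finset.sum_congr rfl fun i _ => Finset.sum_congr rfl fun j _ => ?_
    rw [Finset.sum_comm]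
    refine Finset.sum_congr rfl fun k _ => Finset.sum_congr rfl fun l _ => ?_
    rw [hMs l k]
  have htr : Matrix.trace (g * M * g * Mᵀ)
      = ∑ i, ∑ j, ∑ k, ∑ l, g i k * g j l * M k l * M i j := by
    simp only [Matrix.trace, Matrix.diag_apply, Matrix.mul_apply, Matrix.transpose_apply,
      Finset.sum_mul]
    refine Finset.sum_congr rfl fun i _ => ?_
    refine Finset.sum_congr rfl fun j _ => ?_
    rw [Finset.sum_comm]
    refine Finset.sum_congr rfl fun k _ => Finset.sum_congr rfl fun l _ => ?_
    rw [hgs l j]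
    ring
  have hNsym : Nᵀ = N := by
    rw [hN, Matrix.transpose_mul, Matrix.transpose_mul, hSsym, hM, Matrix.mul_assoc]
  have hNs : ∀ i j, N i j = N j i := fun i j => congrFun (congrFun hNsym j) i
  have tN : Matrix.trace (g * M * g * Mᵀ) = F := by
    rw [hM, hg]
    have e1 : S * S * M * (S * S) * M = S * (S * M * (S * S) * M) := by
      simp only [Matrix.mul_assoc]
    rw [e1, Matrix.trace_mul_comm]
    have e2 : S * M * (S * S) * M * S = N * N := by
      rw [hN]; simp only [Matrix.mul_assoc]
    rw [e2]
    have e3 : Matrix.trace (N * N) = ∑ i, ∑ j, N i j * N j i := by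
      simp [Matrix.trace, Matrix.mul_apply]
    rw [e3, hF]
    refine Finset.sum_congr rfl fun i _ => Finset.sum_congr rfl fun j _ => ?_
    rw [← hNs i j]
    ring
  have tQ : (∑ i, ∑ j, ∑ k, ∑ l, mu * (g i k * g j l * M k l * M i j)) = mu * F := by
    simp only [← Finset.mul_sum]
    rw [← htr, tN]
  have hMeq : M = S⁻¹ * N * S⁻¹ := by
    rw [hN]
    calc M = (S⁻¹ * S) * M * (S * S⁻¹) := by rw [hSiS, hSSi, Matrix.one_mul, Matrix.mul_one]
      _ = S⁻¹ * (S * M * S) * S⁻¹ := by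
        simp only [Matrix.mul_assoc]
  have hb : P ≤ c * F * c := by
    calc P = ∑ i, ∑ j, ((S⁻¹ * N * S⁻¹) i j) ^ 2 := by rw [hP, ← hMeq]
      _ ≤ (∑ i, ∑ j, ((S⁻¹ * N) i j) ^ 2) * c := frob_mul_le _ _
      _ ≤ (c * F) * c := by
          have := frob_mul_le S⁻¹ N
          exact mul_le_mul_of_nonneg_right this hcpos.le
  have key : ∑ i, ∑ j, ∑ k, ∑ l, A i j k l * M k l * M i j = lam * T ^ 2 + 2 * mu * F := by
    rw [split, t1, t3, tQ]; ring
  rw [key]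
  have hFnn : 0 ≤ F := frob_sq_nonneg N
  have h1 : mu / c ^ 2 * P ≤ mu * F := by
    calc mu / c ^ 2 * P ≤ mu / c ^ 2 * (c * F * c) := by
          exact mul_le_mul_of_nonneg_left hb (by positivity)
      _ = mu * F := by field_simp
  nlinarith [mul_nonneg hlam (sq_nonneg T), mul_nonneg hmu.le hFnn]
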